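/- Let L be a list of positive natural numbers, let n be the sum of L and m its length. Then Π_{k ∈ L} h(k) ≥ (2 + √2)^n · (2 − √2)^m, as real numbers. -/

import Mathlib

/-- `hcomp k` is the sum over all compositions `c` of `k` of `∏_{p ∈ c.blocks} (p + 1)`;
in particular `hcomp 0 = 1`. -/
def hcomp (k : ℕ) : ℕ := ∑ c : Composition k, (c.blocks.map (· + 1)).prod

lemma comp_sigma_ext {p q : ℕ} (c : Composition p) (d : Composition q)
    (h : c.blocks = d.blocks) : (⟨p, c⟩ : Σ k, Composition k) = ⟨q, d⟩ := by
  have hpq : p = q := by rw [← c.blocks_sum, ← d.blocks_sum, h]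
  subst hpq
  congr 1
  exact Composition.ext h

lemma hcomp_zero : hcomp 0 = 1 := by
  have key : ∀ c : Composition 0, c.blocks = [] := by
    intro c
    rcases hb : c.blocks with _ | ⟨a, t⟩
    · rfl
    · exfalso
      have hpos : 0 < a := c.blocks_pos (by rw [hb]; exact List.mem_cons_self)
      have hs := c.blocks_sum
      rw [hb] at hs
      simp [List.sum_cons] at hs
      omega
  unfold hcomp
  rw [Finset.sum_eq_single (⟨[], by simp, by simp⟩ : Composition 0)]
  · simp
  · intro b _ hb
    exfalso
    exact hb (Composition.ext (key b))
  · intro h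
    exact absurd (Finset.mem_univ _) h

lemma hcomp_succ (n : ℕ) :
    hcomp (n + 1) = ∑ p ∈ Finset.range (n + 1), (n + 2 - p) * hcomp p := by
  unfold hcomp
  simp_rw [Finset.mul_sum]
  rw [Finset.sum_sigma']
  refine Finset.sum_bij' (i := fun c _ => (⟨c.blocks.tail.sum,
      ⟨c.blocks.tail, fun hi => c.blocks_pos (List.mem_of_mem_tail hi), rfl⟩⟩ :
        Σ k, Composition k))
    (j := fun x hx => ⟨(n + 1 - x.1) :: x.2.blocks, ?_, ?_⟩) ?_ ?_ ?_ ?_ ?_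
  · intro i hi
    rw [List.mem_cons] at hi
    rcases hi with rfl | hi
    · have := Finset.mem_range.1 (Finset.mem_sigma.1 hx).1
      omega
    · exact x.2.blocks_pos hi
  · have hx1 := Finset.mem_range.1 (Finset.mem_sigma.1 hx).1
    have := x.2.blocks_sum
    simp only [List.sum_cons, this]
    omega
  · -- i lands in the sigma set
    intro c _
    obtain ⟨a, t, hb⟩ := List.exists_cons_of_ne_nil (l := c.blocks) (by
      intro h
      have := c.blocks_sum
      rw [h] at this
      simp at this)
    have hpos : 0 < a := c.blocks_pos (by rw [hb]; exact List.mem_cons_self)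
    have hs := c.blocks_sum
    rw [hb, List.sum_cons] at hs
    have ht : c.blocks.tail.sum = t.sum := by rw [hb, List.tail_cons]
    refine Finset.mem_sigma.2 ⟨Finset.mem_range.2 ?_, Finset.mem_univ _⟩
    show c.blocks.tail.sum < n + 1
    omega
  · intro x _; exact Finset.mem_univ _
  · -- left inverse
    intro c _
    apply Composition.ext
    show (n + 1 - c.blocks.tail.sum) :: c.blocks.tail = c.blocks
    obtain ⟨a, t, hb⟩ := List.exists_cons_of_ne_nil (l := c.blocks) (by
      intro h
      have := c.blocks_sum
      rw [h] at this
      simp at this)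
    have hpos : 0 < a := c.blocks_pos (by rw [hb]; exact List.mem_cons_self)
    have hs := c.blocks_sum
    rw [hb, List.sum_cons] at hs
    rw [hb, List.tail_cons]
    have : n + 1 - t.sum = a := by omega
    rw [this]
  · -- right inverse
    intro x hx
    exact comp_sigma_ext _ _ (by simp)
  · -- values agree
    intro c _
    show (c.blocks.map (· + 1)).prod
        = (n + 2 - c.blocks.tail.sum) * (c.blocks.tail.map (· + 1)).prod
    obtain ⟨a, t, hb⟩ := List.exists_cons_of_ne_nil (l := c.blocks) (by
      intro h
      have := c.blocks_sum
      rw [h] at this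
      simp at this)
    have hpos : 0 < a := c.blocks_pos (by rw [hb]; exact List.mem_cons_self)
    have hs := c.blocks_sum
    rw [hb, List.sum_cons] at hs
    rw [hb, List.tail_cons, List.map_cons, List.prod_cons]
    have : n + 2 - t.sum = a + 1 := by omega
    rw [this]

lemma hcomp_one : hcomp 1 = 2 := by
  rw [hcomp_succ]
  simp [hcomp_zero]

lemma hcomp_two : hcomp 2 = 7 := by
  rw [hcomp_succ]
  simp [Finset.sum_range_succ, hcomp_zero, hcomp_one]

lemma hcomp_key (m : ℕ) : hcomp (m + 2) =
    3 * hcomp (m + 1) + ∑ p ∈ Finset.range (m + 1), hcomp p := by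
  rw [show m + 2 = m + 1 + 1 from rfl, hcomp_succ (m + 1), Finset.sum_range_succ]
  have e : ∑ p ∈ Finset.range (m + 1), (m + 1 + 2 - p) * hcomp p
      = ∑ p ∈ Finset.range (m + 1), ((m + 2 - p) * hcomp p + hcomp p) := by
    refine Finset.sum_congr rfl (fun p hp => ?_)
    have := Finset.mem_range.1 hp
    have h4 : m + 1 + 2 - p = (m + 2 - p) + 1 := by omega
    rw [h4, add_mul, one_mul]
  rw [e, Finset.sum_add_distrib, ← hcomp_succ m]
  have h5 : m + 1 + 2 - (m + 1) = 2 := by omega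
  rw [h5]
  ring

lemma hcomp_three_step (n : ℕ) : hcomp (n + 3) + 2 * hcomp (n + 1) = 4 * hcomp (n + 2) := by
  have k1 := hcomp_key (n + 1)
  have k2 := hcomp_key n
  rw [show n + 1 + 2 = n + 3 from rfl, show n + 1 + 1 = n + 2 from rfl,
    Finset.sum_range_succ] at k1
  omega

lemma sqrt2_lt : Real.sqrt 2 < 3/2 := by
  have : (Real.sqrt 2) ^ 2 = 2 := Real.sq_sqrt (by norm_num)
  nlinarith [Real.sqrt_nonneg 2]

lemma sqrt2_pos : (0:ℝ) < Real.sqrt 2 := Real.sqrt_pos.2 (by norm_num)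

lemma hcomp_ratio (k : ℕ) :
    (2 + Real.sqrt 2) * hcomp (k + 1) ≤ (hcomp (k + 2) : ℝ) := by
  induction k with
  | zero =>
      rw [hcomp_one, hcomp_two]
      push_cast
      nlinarith [sqrt2_lt, sqrt2_pos]
  | succ m ih =>
      have hrec := hcomp_three_step m
      have hrecR : (hcomp (m + 3) : ℝ) = 4 * hcomp (m + 2) - 2 * hcomp (m + 1) := by
        have : (hcomp (m + 3) + 2 * hcomp (m + 1) : ℝ) = 4 * hcomp (m + 2) := by
          exact_mod_cast congrArg (Nat.cast : ℕ → ℝ) hrec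
        linarith
      have hs : Real.sqrt 2 ^ 2 = 2 := Real.sq_sqrt (by norm_num)
      -- goal : (2+√2) * hcomp (m+2) ≤ hcomp (m+3)
      rw [show m + 1 + 1 = m + 2 from rfl, show m + 1 + 2 = m + 3 from rfl]
      rw [hrecR]
      -- (2+√2) h(m+2) ≤ 4 h(m+2) - 2 h(m+1)
      -- i.e. 2 h(m+1) ≤ (2-√2) h(m+2); from ih: (2+√2) h(m+1) ≤ h(m+2)
      nlinarith [ih, sqrt2_lt, sqrt2_pos, Nat.cast_nonneg (α := ℝ) (hcomp (m + 1))]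

lemma hcomp_lower (k : ℕ) (hk : 0 < k) :
    (2 + Real.sqrt 2) ^ k * (2 - Real.sqrt 2) ≤ (hcomp k : ℝ) := by
  have hs : Real.sqrt 2 ^ 2 = 2 := Real.sq_sqrt (by norm_num)
  obtain ⟨j, rfl⟩ : ∃ j, k = j + 1 := ⟨k - 1, by omega⟩
  induction j with
  | zero =>
      rw [hcomp_one]
      push_cast
      nlinarith [sqrt2_lt, sqrt2_pos]
  | succ m ih =>
      have ih' := ih (by omega)
      have hr := hcomp_ratio m
      calc (2 + Real.sqrt 2) ^ (m + 2) * (2 - Real.sqrt 2)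
          = (2 + Real.sqrt 2) * ((2 + Real.sqrt 2) ^ (m + 1) * (2 - Real.sqrt 2)) := by ring
        _ ≤ (2 + Real.sqrt 2) * hcomp (m + 1) := by
            apply mul_le_mul_of_nonneg_left ih'
            nlinarith [sqrt2_pos]
        _ ≤ (hcomp (m + 2) : ℝ) := hr

/-- For a list `L` of positive naturals with sum `n` and length `m`,
`∏_{k ∈ L} hcomp k ≥ (2 + √2)^n · (2 − √2)^m`. -/
theorem stmt_16 (L : List ℕ) (hL : ∀ x ∈ L, 0 < x) :
    ((L.map hcomp).prod : ℝ) ≥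
      (2 + Real.sqrt 2) ^ L.sum * (2 - Real.sqrt 2) ^ L.length := by
  induction L with
  | nil => simp
  | cons a t ih =>
      have ha : 0 < a := hL a (List.mem_cons_self)
      have iht := ih (fun x hx => hL x (List.mem_cons_of_mem _ hx))
      have hla := hcomp_lower a ha
      have hs : Real.sqrt 2 ^ 2 = 2 := Real.sq_sqrt (by norm_num)
      have hpos1 : (0:ℝ) < 2 + Real.sqrt 2 := by nlinarith [sqrt2_pos]
      have hpos2 : (0:ℝ) < 2 - Real.sqrt 2 := by nlinarith [sqrt2_lt, sqrt2_pos]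
      simp only [List.map_cons, List.prod_cons, List.sum_cons, List.length_cons,
        Nat.cast_mul, ge_iff_le]
      calc (2 + Real.sqrt 2) ^ (a + t.sum) * (2 - Real.sqrt 2) ^ (t.length + 1)
          = ((2 + Real.sqrt 2) ^ a * (2 - Real.sqrt 2)) *
            ((2 + Real.sqrt 2) ^ t.sum * (2 - Real.sqrt 2) ^ t.length) := by ring
        _ ≤ (hcomp a : ℝ) * ((t.map hcomp).prod : ℝ) := by
            apply mul_le_mul hla iht (by positivity) (Nat.cast_nonneg _)
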